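/- Let H be a numerical semigroup containing q with smallest nonzero element λ₁. Then 1 + #(H \ (qH* + H)) = qλ₁ + 1; that is, when q ∈ H the Geil–Matsumoto bound coincides with the Lewittes bound qλ₁ + 1. -/

import Mathlib

/-- A numerical semigroup: a subset of ℕ containing 0, closed under addition,
with finite complement in ℕ. -/
def IsNumericalSemigroup (H : Set ℕ) : Prop :=
  0 ∈ H ∧ (∀ a ∈ H, ∀ b ∈ H, a + b ∈ H) ∧ (Hᶜ : Set ℕ).Finite

/-- If q ∈ H and λ₁ is the smallest nonzero element of H, then
1 + #(H \ (qH* + H)) = qλ₁ + 1: the Geil–Matsumoto bound coincides with the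
Lewittes bound qλ₁ + 1 when q ∈ H. -/
theorem stmt_19 (H : Set ℕ) (hH : IsNumericalSemigroup H)
    (q : ℕ) (hq : 0 < q) (hqH : q ∈ H)
    (lam1 : ℕ) (hlam1 : IsLeast {h | h ∈ H ∧ h ≠ 0} lam1) :
    1 + (H \ {x | ∃ l ∈ H, l ≠ 0 ∧ ∃ m ∈ H, x = q * l + m}).ncard = q * lam1 + 1 := by
  classical
  obtain ⟨h0, hadd, hfin⟩ := hH
  obtain ⟨⟨hl1H, hl1ne⟩, hl1min⟩ := hlam1
  have hmul : ∀ k : ℕ, q * k ∈ H := by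
    intro k
    induction k with
    | zero => simpa using h0
    | succ n ih => rw [Nat.mul_succ]; exact hadd _ ih _ hqH
  set c := q * lam1 with hc
  have hcH : c ∈ H := hmul lam1
  have hset : {x | ∃ l ∈ H, l ≠ 0 ∧ ∃ m ∈ H, x = q * l + m} = {x | ∃ m ∈ H, x = c + m} := by
    ext x
    constructor
    · rintro ⟨l, hl, hlne, m, hm, rfl⟩
      have hle : lam1 ≤ l := hl1min ⟨hl, hlne⟩
      refine ⟨q * (l - lam1) + m, hadd _ (hmul _) _ hm, ?_⟩
      have : q * l = c + q * (l - lam1) := by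
        rw [hc, ← Nat.mul_add, Nat.add_sub_cancel' hle]
      omega
    · rintro ⟨m, hm, rfl⟩
      exact ⟨lam1, hl1H, hl1ne, m, hm, rfl⟩
  rw [hset]
  obtain ⟨M, hM⟩ := hfin.bddAbove
  set N := M + 1 with hN
  have hNH : ∀ n, N ≤ n → n ∈ H := by
    intro n hn
    by_contra h
    have := hM h
    omega
  set A := (Finset.range (N + c)).filter (· ∈ H) with hA
  set B := ((Finset.range N).filter (· ∈ H)).image (· + c) with hB
  have hBA : B ⊆ A := by
    intro x hx
    simp only [hB, Finset.mem_image, Finset.mem_filter, Finset.mem_range] at hx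
    obtain ⟨m, ⟨hm1, hm2⟩, rfl⟩ := hx
    simp only [hA, Finset.mem_filter, Finset.mem_range]
    exact ⟨by omega, hadd _ hm2 _ hcH⟩
  have hSeq : H \ {x | ∃ m ∈ H, x = c + m} = ↑(A \ B) := by
    ext x
    simp only [Set.mem_diff, Set.mem_setOf_eq, Finset.coe_sdiff, Finset.mem_coe,
      hA, hB, Finset.mem_filter, Finset.mem_range, Finset.mem_image]
    constructor
    · rintro ⟨hxH, hx⟩
      refine ⟨⟨?_, hxH⟩, ?_⟩
      · by_contra h
        push_neg at h
        exact hx ⟨x - c, hNH _ (by omega), by omega⟩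
      · rintro ⟨m, ⟨hm1, hm2⟩, rfl⟩
        exact hx ⟨m, hm2, by omega⟩
    · rintro ⟨⟨hx1, hx2⟩, hx3⟩
      refine ⟨hx2, ?_⟩
      rintro ⟨m, hm, rfl⟩
      exact hx3 ⟨m, ⟨by omega, hm⟩, by omega⟩
  rw [hSeq, Set.ncard_coe_finset]
  have hcardB : B.card = ((Finset.range N).filter (· ∈ H)).card :=
    Finset.card_image_of_injective _ (add_left_injective c)
  have hcardA : A.card = ((Finset.range N).filter (· ∈ H)).card + c := by
    have hsplit : Finset.range (N + c) = Finset.range N ∪ Finset.Ico N (N + c) := by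
      rw [Finset.range_eq_Ico, Finset.range_eq_Ico]
      exact (Finset.Ico_union_Ico_eq_Ico (Nat.zero_le _) (Nat.le_add_right _ _)).symm
    have h2 : (Finset.Ico N (N + c)).filter (· ∈ H) = Finset.Ico N (N + c) :=
      Finset.filter_true_of_mem (fun x hx => hNH x (Finset.mem_Ico.mp hx).1)
    have hdisj : Disjoint ((Finset.range N).filter (· ∈ H))
        ((Finset.Ico N (N + c)).filter (· ∈ H)) :=
      Finset.disjoint_filter_filter (by
        rw [Finset.range_eq_Ico]
        exact Finset.Ico_disjoint_Ico_consecutive 0 N (N + c))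
    rw [hA, hsplit, Finset.filter_union, Finset.card_union_of_disjoint hdisj, h2, Nat.card_Ico]
    omega
  rw [Finset.card_sdiff_of_subset hBA]
  omega
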